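/- In the three-state counterexample gambling game with J = [0,1/4], min I = 0 and max I = 1/4, write x_λ = v_λ(a,a') and y_λ = v_λ(a,b'). If λ_n → 0 is a sequence of discount factors such that for each n the open interval (√(λollows_n)/2, 2√(λ_n)) does not intersect I, then limsup_n y_{λ_n} ≤ 4/9. -/

import Mathlib

open MeasureTheory Set Filter Topology

noncomputable section
namespace GG

abbrev PM (S : Type*) [MeasurableSpace S] := MeasureTheory.ProbabilityMeasure S

variable {S : Type*} [MeasurableSpace S]

/-- Dirac probability measure. -/
def dirac (s : S) : PM S := ⟨MeasureTheory.Measure.dirac s, inferInstance⟩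

/-- Integral of a function against a probability measure (the affine extension `f̃`). -/
def iPM (f : S → ℝ) (p : PM S) : ℝ := ∫ s, f s ∂(p : MeasureTheory.Measure S)

/-- `r` is the mixture `t p + (1-t) q`. -/
def IsMix (t : NNReal) (p q r : PM S) : Prop :=
  (r : MeasureTheory.Measure S)
    = (t : ENNReal) • (p : MeasureTheory.Measure S)
      + ((1 : ENNReal) - (t : ENNReal)) • (q : MeasureTheory.Measure S)

/-- Convexity of a set of probability measures. -/
def PMConvex (A : Set (PM S)) : Prop :=
  ∀ p ∈ A, ∀ q ∈ A, ∀ t : NNReal, t ≤ 1 → ∀ r : PM S, IsMix t p q r → r ∈ A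

/-- Convexity of a set of pairs of probability measures. -/
def PMConvex2 (A : Set (PM S × PM S)) : Prop :=
  ∀ a ∈ A, ∀ b ∈ A, ∀ t : NNReal, t ≤ 1 → ∀ c : PM S × PM S,
    IsMix t a.1 b.1 c.1 → IsMix t a.2 b.2 c.2 → c ∈ A

/-- Convex hull of a set of probability measures. -/
def convexHullPM (A : Set (PM S)) : Set (PM S) := ⋂₀ {T | A ⊆ T ∧ PMConvex T}

/-- Convex hull of a set of pairs of probability measures. -/
def convexHull2 (A : Set (PM S × PM S)) : Set (PM S × PM S) := ⋂₀ {T | A ⊆ T ∧ PMConvex2 T}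

/-- Kantorovich–Rubinstein distance. -/
def dKR {S : Type*} [MeasurableSpace S] [PseudoMetricSpace S] (p q : PM S) : ℝ :=
  sSup {r | ∃ f : S → ℝ, LipschitzWith 1 f ∧ r = |iPM f p - iPM f q|}

def argmaxOn {α : Type*} (f : α → ℝ) (A : Set α) : Set α := {p ∈ A | ∀ q ∈ A, f q ≤ f p}

def argminOn {α : Type*} (f : α → ℝ) (A : Set α) : Set α := {p ∈ A | ∀ q ∈ A, f p ≤ f q}

section Topo

variable [TopologicalSpace S] [OpensMeasurableSpace S]

/-- Graph of the linear extension `Γ̃`: the closed convex hull of the graph of `Γ`. -/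
def tGraph (Γ : S → Set (PM S)) : Set (PM S × PM S) :=
  closure (convexHull2 {z | ∃ x : S, z.1 = dirac x ∧ z.2 ∈ Γ x})

/-- The linear extension `Γ̃ : Δ(S) ⇉ Δ(S)`. -/
def tStep (Γ : S → Set (PM S)) (p : PM S) : Set (PM S) := {q | (p, q) ∈ tGraph Γ}

/-- Iterates `Γ̃ⁿ`, with `Γ̃⁰(p) = {p}` and `Γ̃^{n+1} = Γ̃ⁿ ∘ Γ̃`. -/
def tIter (Γ : S → Set (PM S)) : ℕ → PM S → Set (PM S)
  | 0, p => {p}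
  | n + 1, p => {r | ∃ q ∈ tStep Γ p, r ∈ tIter Γ n q}

/-- The reachable set `Γ^∞(x)`: closure of `⋃ₙ Γ̃ⁿ(δ_x)`. -/
def reach (Γ : S → Set (PM S)) (x : S) : Set (PM S) :=
  closure (⋃ n : ℕ, tIter Γ n (dirac x))

/-- There is a bounded measurable lower semicontinuous `φ` whose (expectation) argmax over
`R x` is exactly `{δ_x}`, for every `x`. -/
def AcyclicFor (R : S → Set (PM S)) : Prop :=
  ∃ φ : S → ℝ, Measurable φ ∧ (∃ C : ℝ, ∀ s, |φ s| ≤ C) ∧ LowerSemicontinuous φ ∧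
    ∀ x : S, argmaxOn (iPM φ) (R x) = {dirac x}

/-- There is a bounded measurable upper semicontinuous `ψ` whose (expectation) argmin over
`R y` is exactly `{δ_y}`, for every `y`. -/
def AcyclicForMin (R : S → Set (PM S)) : Prop :=
  ∃ ψ : S → ℝ, Measurable ψ ∧ (∃ C : ℝ, ∀ s, |ψ s| ≤ C) ∧ UpperSemicontinuous ψ ∧
    ∀ y : S, argminOn (iPM ψ) (R y) = {dirac y}

end Topo

section TwoPlayers

variable {X Y : Type*} [MeasurableSpace X] [MeasurableSpace Y]

/-- The bi-affine extension `ṽ(p,q) = ∫∫ v dp dq`. -/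
def iXY (v : X × Y → ℝ) (p : PM X) (q : PM Y) : ℝ :=
  ∫ x, ∫ y, v (x, y) ∂(q : MeasureTheory.Measure Y) ∂(p : MeasureTheory.Measure X)

/-- `v` is excessive: `v(x,y) = max_{p ∈ Γ(x)} ṽ(p,y)`. -/
def Excessive (Γ : X → Set (PM X)) (v : X × Y → ℝ) : Prop :=
  ∀ x : X, ∀ y : Y, IsGreatest ((fun p => iXY v p (dirac y)) '' Γ x) (v (x, y))

/-- `v` is depressive: `v(x,y) = min_{q ∈ Λ(y)} ṽ(x,q)`. -/
def Depressive (Λ : Y → Set (PM Y)) (v : X × Y → ℝ) : Prop :=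
  ∀ x : X, ∀ y : Y, IsLeast ((fun q => iXY v (dirac x) q) '' Λ y) (v (x, y))

/-- `v` is balanced: `v(x,y) = max_{p ∈ Γ(x)} min_{q ∈ Λ(y)} ṽ(p,q)
    = min_{q ∈ Λ(y)} max_{p ∈ Γ(x)} ṽ(p,q)`. -/
def Balanced (Γ : X → Set (PM X)) (Λ : Y → Set (PM Y)) (v : X × Y → ℝ) : Prop :=
  ∀ x : X, ∀ y : Y,
    IsGreatest {r | ∃ p ∈ Γ x, IsLeast (iXY v p '' Λ y) r} (v (x, y)) ∧
    IsLeast {r | ∃ q ∈ Λ y, IsGreatest ((fun p => iXY v p q) '' Γ x) r} (v (x, y))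

variable [TopologicalSpace X] [OpensMeasurableSpace X] [TopologicalSpace Y] [OpensMeasurableSpace Y]

/-- Property P1: for all `(x,y)` there is `p ∈ Γ^∞(x)` with `v(x,y) = ṽ(p,y) ≤ ũ(p,y)`. -/
def P1 (Γ : X → Set (PM X)) (u v : X × Y → ℝ) : Prop :=
  ∀ x : X, ∀ y : Y, ∃ p ∈ reach Γ x,
    v (x, y) = iXY v p (dirac y) ∧ iXY v p (dirac y) ≤ iXY u p (dirac y)

/-- Property P2: for all `(x,y)` there is `q ∈ Λ^∞(y)` with `v(x,y) = ṽ(x,q) ≥ ũ(x,q)`. -/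
def P2 (Λ : Y → Set (PM Y)) (u v : X × Y → ℝ) : Prop :=
  ∀ x : X, ∀ y : Y, ∃ q ∈ reach Λ y,
    v (x, y) = iXY v (dirac x) q ∧ iXY u (dirac x) q ≤ iXY v (dirac x) q

/-- `w` satisfies the Shapley fixed point equation for discount factor `lam`:
`w(x,y) = max_{p∈Γ(x)} min_{q∈Λ(y)} (λ u(x,y) + (1-λ) w̃(p,q))
        = min_{q∈Λ(y)} max_{p∈Γ(x)} (λ u(x,y) + (1-λ) w̃(p,q))`. -/
def ShapleyEq (Γ : X → Set (PM X)) (Λ : Y → Set (PM Y)) (u : X × Y → ℝ)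
    (lam : ℝ) (w : X × Y → ℝ) : Prop :=
  ∀ x : X, ∀ y : Y,
    IsGreatest {r | ∃ p ∈ Γ x,
      IsLeast ((fun q => lam * u (x, y) + (1 - lam) * iXY w p q) '' Λ y) r} (w (x, y)) ∧
    IsLeast {r | ∃ q ∈ Λ y,
      IsGreatest ((fun p => lam * u (x, y) + (1 - lam) * iXY w p q) '' Γ x) r} (w (x, y))

end TwoPlayers

/-- A standard gambling game: compact metric state spaces, continuous payoff,
continuous transition multifunctions with nonempty convex compact values,
leavable and non expansive. -/
structure StdGame (X Y : Type*) [MetricSpace X] [MeasurableSpace X] [OpensMeasurableSpace X]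
    [MetricSpace Y] [MeasurableSpace Y] [OpensMeasurableSpace Y] where
  G : X → Set (PM X)
  L : Y → Set (PM Y)
  u : X × Y → ℝ
  u_cont : Continuous u
  G_ne : ∀ x, (G x).Nonempty
  G_cvx : ∀ x, PMConvex (G x)
  G_cpt : ∀ x, IsCompact (G x)
  G_cont : ∀ ε : ℝ, 0 < ε → ∃ α : ℝ, 0 < α ∧ ∀ x x' : X, dist x x' ≤ α →
    ∀ p ∈ G x, ∃ p' ∈ G x', dKR p p' ≤ ε
  G_leav : ∀ x, dirac x ∈ G x
  G_nonexp : ∀ x x' : X, ∀ p ∈ G x, ∃ p' ∈ G x', dKR p p' ≤ dist x x'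
  L_ne : ∀ y, (L y).Nonempty
  L_cvx : ∀ y, PMConvex (L y)
  L_cpt : ∀ y, IsCompact (L y)
  L_cont : ∀ ε : ℝ, 0 < ε → ∃ α : ℝ, 0 < α ∧ ∀ y y' : Y, dist y y' ≤ α →
    ∀ q ∈ L y, ∃ q' ∈ L y', dKR q q' ≤ ε
  L_leav : ∀ y, dirac y ∈ L y
  L_nonexp : ∀ y y' : Y, ∀ q ∈ L y, ∃ q' ∈ L y', dKR q q' ≤ dist y y'

end GG

namespace GG

/-! The three-state counterexample gambling game. -/

/-- Three states a, b, c (Player 2 uses the primed copy a', b', c' of the same type). -/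
inductive St : Type
  | a | b | c
deriving DecidableEq

instance instFintypeSt : Fintype St := ⟨{St.a, St.b, St.c}, fun x => by cases x <;> simp⟩

instance : TopologicalSpace St := ⊥
instance : DiscreteTopology St := ⟨rfl⟩
instance : MeasurableSpace St := ⊤
instance : BorelSpace St := ⟨(borel_eq_top_of_discrete (α := St)).symm⟩

/-- Generator: probability measures of the form
(1 - t - t^2) delta_x + t delta_y + t^2 delta_z for t in the parameter set I. -/
def gen (x y z : St) (I : Set ℝ) : Set (PM St) :=
  {p | ∃ t ∈ I, ((p {x} : NNReal) : ℝ) = 1 - t - t ^ 2 ∧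
    ((p {y} : NNReal) : ℝ) = t ∧ ((p {z} : NNReal) : ℝ) = t ^ 2}

/-- The transition multifunction of the counterexample, for the parameter set I:
Gam(c) = {delta_c}, Gam(a) = conv gen(a,b,c), Gam(b) = conv gen(b,a,c). -/
def Gam (I : Set ℝ) : St → Set (PM St)
  | St.a => convexHullPM (gen St.a St.b St.c I)
  | St.b => convexHullPM (gen St.b St.a St.c I)
  | St.c => {dirac St.c}

/-- The payoff: 0 on the diagonal and 1 off the diagonal. -/
def pay : St × St → ℝ := fun z => if z.1 = z.2 then 0 else 1

/-- The candidate limit value with parameter t: rows a, b equal t on columns a', b',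
equal 1 on column c'; row c identically 0. -/
def limitVal (t : ℝ) : St × St → ℝ := fun z =>
  match z with
  | (St.c, _) => 0
  | (_, St.c) => 1
  | _ => t

end GG

namespace GG

instance : MeasurableSingletonClass St := ⟨fun _ => trivial⟩

lemma integrable_st (f : St → ℝ) (μ : Measure St) [IsFiniteMeasure μ] : Integrable f μ :=
  .of_finite

/-- real-valued atom of a probability measure on St -/
def atm (p : PM St) (s : St) : ℝ := ((p : Measure St) {s}).toReal

lemma atm_nonneg (p : PM St) (s : St) : 0 ≤ atm p s := ENNReal.toReal_nonneg

lemma coe_app (p : PM St) (s : St) : ((p {s} : NNReal) : ℝ) = atm p s := rfl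

lemma univ_st : (Finset.univ : Finset St) = {St.a, St.b, St.c} := rfl

lemma iPM_eq (f : St → ℝ) (p : PM St) :
    iPM f p = atm p St.a * f St.a + atm p St.b * f St.b + atm p St.c * f St.c := by
  rw [iPM, integral_fintype, univ_st]
  simp [Finset.sum_insert, atm, Measure.real, mul_comm]
  ring
  exact integrable_st f _

lemma atm_sum (p : PM St) : atm p St.a + atm p St.b + atm p St.c = 1 := by
  have h := iPM_eq (fun _ => 1) p
  have h2 : iPM (fun _ => (1:ℝ)) p = 1 := by
    rw [iPM, integral_const]
    simp
  rw [h2] at h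
  linarith

lemma iPM_mono {f g : St → ℝ} (h : ∀ s, f s ≤ g s) (p : PM St) : iPM f p ≤ iPM g p := by
  rw [iPM_eq, iPM_eq]
  have ha := atm_nonneg p St.a; have hb := atm_nonneg p St.b; have hc := atm_nonneg p St.c
  nlinarith [h St.a, h St.b, h St.c]

lemma iPM_le_const {f : St → ℝ} {C : ℝ} (h : ∀ s, f s ≤ C) (p : PM St) : iPM f p ≤ C := by
  rw [iPM_eq]
  have hs := atm_sum p
  have ha := atm_nonneg p St.a; have hb := atm_nonneg p St.b; have hc := atm_nonneg p St.c
  have e : atm p St.a * C + atm p St.b * C + atm p St.c * C = C := by linear_combination C * hs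
  have h2 := mul_le_mul_of_nonneg_left (h St.a) ha
  have h3 := mul_le_mul_of_nonneg_left (h St.b) hb
  have h4 := mul_le_mul_of_nonneg_left (h St.c) hc
  linarith

lemma const_le_iPM {f : St → ℝ} {C : ℝ} (h : ∀ s, C ≤ f s) (p : PM St) : C ≤ iPM f p := by
  rw [iPM_eq]
  have hs := atm_sum p
  have ha := atm_nonneg p St.a; have hb := atm_nonneg p St.b; have hc := atm_nonneg p St.c
  have e : atm p St.a * C + atm p St.b * C + atm p St.c * C = C := by linear_combination C * hs
  have h2 := mul_le_mul_of_nonneg_left (h St.a) ha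
  have h3 := mul_le_mul_of_nonneg_left (h St.b) hb
  have h4 := mul_le_mul_of_nonneg_left (h St.c) hc
  linarith

lemma atm_mix {t : NNReal} (ht : t ≤ 1) {p q r : PM St} (hmix : IsMix t p q r) (s : St) :
    atm r s = (t : ℝ) * atm p s + (1 - (t : ℝ)) * atm q s := by
  have h1 : ((1 : ENNReal) - (t : ENNReal)) = ((1 - t : NNReal) : ENNReal) := by
    rw [ENNReal.coe_sub]; simp
  have hp : (p : Measure St) {s} ≠ ⊤ := measure_ne_top _ _
  have hq : (q : Measure St) {s} ≠ ⊤ := measure_ne_top _ _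
  have : atm r s = (((t : ENNReal)) * (p : Measure St) {s}
      + ((1 - t : NNReal) : ENNReal) * (q : Measure St) {s}).toReal := by
    rw [atm, hmix, ← h1]
    simp [Measure.smul_apply, smul_eq_mul]
  rw [this, ENNReal.toReal_add (by finiteness) (by finiteness), ENNReal.toReal_mul,
    ENNReal.toReal_mul]
  simp only [ENNReal.coe_toReal, NNReal.coe_sub ht, atm]
  norm_num

lemma iPM_mix {t : NNReal} (ht : t ≤ 1) {p q r : PM St} (hmix : IsMix t p q r) (f : St → ℝ) :
    iPM f r = (t : ℝ) * iPM f p + (1 - (t : ℝ)) * iPM f q := by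
  rw [iPM_eq, iPM_eq, iPM_eq, atm_mix ht hmix, atm_mix ht hmix, atm_mix ht hmix]
  ring

lemma subset_hull (A : Set (PM St)) : A ⊆ convexHullPM A := by
  intro p hp T hT
  exact hT.1 hp

lemma hull_le (A : Set (PM St)) (cc : St → ℝ) (r : ℝ) (h : ∀ p ∈ A, iPM cc p ≤ r) :
    ∀ p ∈ convexHullPM A, iPM cc p ≤ r := by
  intro p hp
  refine hp {q | iPM cc q ≤ r} ⟨h, ?_⟩
  intro p1 h1 p2 h2 t ht r' hmix
  have := iPM_mix ht hmix cc
  have ht0 : (0:ℝ) ≤ (t:ℝ) := t.2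
  have ht1 : (t:ℝ) ≤ 1 := ht
  simp only [Set.mem_setOf_eq] at h1 h2 ⊢
  nlinarith
/-- probability measure on St with prescribed atoms -/
def pmOf (f : St → NNReal) (hf : f St.a + f St.b + f St.c = 1) : PM St :=
  ⟨(f St.a : ENNReal) • Measure.dirac St.a + (f St.b : ENNReal) • Measure.dirac St.b
    + (f St.c : ENNReal) • Measure.dirac St.c, by
    constructor
    simp only [Measure.add_apply, Measure.smul_apply, smul_eq_mul]
    rw [Measure.dirac_apply_of_mem (Set.mem_univ _), Measure.dirac_apply_of_mem (Set.mem_univ _),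
      Measure.dirac_apply_of_mem (Set.mem_univ _)]
    simp only [mul_one]
    rw [← ENNReal.coe_add, ← ENNReal.coe_add, hf, ENNReal.coe_one]⟩

lemma pmOf_atm (f : St → NNReal) (hf : f St.a + f St.b + f St.c = 1) (s : St) :
    atm (pmOf f hf) s = f s := by
  have key : ∀ u v : St, (Measure.dirac u : Measure St) {v} = if u = v then 1 else 0 := by
    intro u v
    rw [Measure.dirac_apply' _ (measurableSet_singleton v)]
    by_cases h : u = v <;> simp [h, Set.indicator]
  show (((f St.a : ENNReal) • Measure.dirac St.a + (f St.b : ENNReal) • Measure.dirac St.b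
    + (f St.c : ENNReal) • Measure.dirac St.c : Measure St) {s}).toReal = _
  simp only [Measure.add_apply, Measure.smul_apply, smul_eq_mul, key]
  cases s <;> simp

lemma dirac_atm (s s' : St) : atm (dirac s) s' = if s = s' then 1 else 0 := by
  show ((Measure.dirac s : Measure St) {s'}).toReal = _
  rw [Measure.dirac_apply' _ (measurableSet_singleton s')]
  by_cases h : s = s' <;> simp [h, Set.indicator]

lemma iPM_dirac (f : St → ℝ) (s : St) : iPM f (dirac s) = f s := by
  rw [iPM_eq]
  cases s <;> simp [dirac_atm]

lemma nnsum (t : ℝ) (h0 : 0 ≤ t) (h2 : t ≤ 1/2) :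
    Real.toNNReal (1 - t - t^2) + Real.toNNReal t + Real.toNNReal (t^2) = 1 := by
  have h1 : (0:ℝ) ≤ 1 - t - t^2 := by nlinarith
  have h3 : (0:ℝ) ≤ t^2 := sq_nonneg t
  ext
  push_cast [Real.coe_toNNReal _ h1, Real.coe_toNNReal _ h0, Real.coe_toNNReal _ h3]
  ring

/-- the measure (1-t-t², t, t²) on (a,b,c) -/
def genA (t : ℝ) (h0 : 0 ≤ t) (h2 : t ≤ 1/2) : PM St :=
  pmOf (fun s => match s with
    | St.a => Real.toNNReal (1 - t - t^2)
    | St.b => Real.toNNReal t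
    | St.c => Real.toNNReal (t^2)) (nnsum t h0 h2)

/-- the measure (t, 1-t-t², t²) on (a,b,c) -/
def genB (t : ℝ) (h0 : 0 ≤ t) (h2 : t ≤ 1/2) : PM St :=
  pmOf (fun s => match s with
    | St.a => Real.toNNReal t
    | St.b => Real.toNNReal (1 - t - t^2)
    | St.c => Real.toNNReal (t^2)) (by rw [show Real.toNNReal t + Real.toNNReal (1 - t - t^2)
      = Real.toNNReal (1 - t - t^2) + Real.toNNReal t from add_comm _ _]; exact nnsum t h0 h2)

lemma genA_atm (t : ℝ) (h0 : 0 ≤ t) (h2 : t ≤ 1/2) :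
    atm (genA t h0 h2) St.a = 1 - t - t^2 ∧ atm (genA t h0 h2) St.b = t ∧
      atm (genA t h0 h2) St.c = t^2 := by
  have h1 : (0:ℝ) ≤ 1 - t - t^2 := by nlinarith
  refine ⟨?_, ?_, ?_⟩ <;>
    simp [genA, pmOf_atm, Real.coe_toNNReal _ h1, Real.coe_toNNReal _ h0,
      Real.coe_toNNReal _ (sq_nonneg t)]

lemma genB_atm (t : ℝ) (h0 : 0 ≤ t) (h2 : t ≤ 1/2) :
    atm (genB t h0 h2) St.a = t ∧ atm (genB t h0 h2) St.b = 1 - t - t^2 ∧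
      atm (genB t h0 h2) St.c = t^2 := by
  have h1 : (0:ℝ) ≤ 1 - t - t^2 := by nlinarith
  refine ⟨?_, ?_, ?_⟩ <;>
    simp [genB, pmOf_atm, Real.coe_toNNReal _ h1, Real.coe_toNNReal _ h0,
      Real.coe_toNNReal _ (sq_nonneg t)]

lemma genA_mem (I' : Set ℝ) (t : ℝ) (ht : t ∈ I') (h0 : 0 ≤ t) (h2 : t ≤ 1/2) :
    genA t h0 h2 ∈ gen St.a St.b St.c I' := by
  obtain ⟨e1, e2, e3⟩ := genA_atm t h0 h2
  exact ⟨t, ht, by rw [coe_app, e1], by rw [coe_app, e2], by rw [coe_app, e3]⟩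

lemma genB_mem (I' : Set ℝ) (t : ℝ) (ht : t ∈ I') (h0 : 0 ≤ t) (h2 : t ≤ 1/2) :
    genB t h0 h2 ∈ gen St.b St.a St.c I' := by
  obtain ⟨e1, e2, e3⟩ := genB_atm t h0 h2
  exact ⟨t, ht, by rw [coe_app, e2], by rw [coe_app, e1], by rw [coe_app, e3]⟩

lemma dirac_mem_genA (I' : Set ℝ) (h : (0:ℝ) ∈ I') : dirac St.a ∈ gen St.a St.b St.c I' :=
  ⟨0, h, by rw [coe_app, dirac_atm, if_pos rfl]; norm_num,
    by rw [coe_app, dirac_atm, if_neg (by decide)],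
    by rw [coe_app, dirac_atm, if_neg (by decide)]; norm_num⟩

lemma dirac_mem_genB (I' : Set ℝ) (h : (0:ℝ) ∈ I') : dirac St.b ∈ gen St.b St.a St.c I' :=
  ⟨0, h, by rw [coe_app, dirac_atm, if_pos rfl]; norm_num,
    by rw [coe_app, dirac_atm, if_neg (by decide)],
    by rw [coe_app, dirac_atm, if_neg (by decide)]; norm_num⟩
lemma iXY_eq (v : St × St → ℝ) (p q : PM St) :
    iXY v p q = iPM (fun x => iPM (fun y => v (x, y)) q) p := rfl

lemma iPM_add_const (f : St → ℝ) (D : ℝ) (p : PM St) :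
    iPM (fun s => f s + D) p = iPM f p + D := by
  have hs := atm_sum p
  rw [iPM_eq, iPM_eq]
  linear_combination D * hs

lemma gen_iPM_A (I' : Set ℝ) (cc : St → ℝ) :
    ∀ p ∈ gen St.a St.b St.c I', ∃ t ∈ I',
      iPM cc p = (1 - t - t^2) * cc St.a + t * cc St.b + t^2 * cc St.c := by
  rintro p ⟨t, ht, h1, h2, h3⟩
  rw [coe_app] at h1 h2 h3
  exact ⟨t, ht, by rw [iPM_eq, h1, h2, h3]⟩

lemma gen_iPM_B (I' : Set ℝ) (cc : St → ℝ) :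
    ∀ p ∈ gen St.b St.a St.c I', ∃ t ∈ I',
      iPM cc p = t * cc St.a + (1 - t - t^2) * cc St.b + t^2 * cc St.c := by
  rintro p ⟨t, ht, h1, h2, h3⟩
  rw [coe_app] at h1 h2 h3
  exact ⟨t, ht, by rw [iPM_eq, h1, h2, h3]⟩

lemma Gam_a (I' : Set ℝ) : Gam I' St.a = convexHullPM (gen St.a St.b St.c I') := rfl
lemma Gam_b (I' : Set ℝ) : Gam I' St.b = convexHullPM (gen St.b St.a St.c I') := rfl
lemma Gam_c (I' : Set ℝ) : Gam I' St.c = {dirac St.c} := rfl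

lemma exists_isGreatest_a (I' : Set ℝ) (hc : IsCompact I') (h0 : (0:ℝ) ∈ I')
    (hsub : I' ⊆ Set.Icc 0 (1/2)) (cc : St → ℝ) (κ μ' : ℝ) (hμ : 0 ≤ μ') :
    ∃ r, IsGreatest ((fun p => κ + μ' * iPM cc p) '' (Gam I' St.a)) r := by
  set e : ℝ → ℝ := fun t => (1 - t - t^2) * cc St.a + t * cc St.b + t^2 * cc St.c with he
  have hecont : Continuous e := by fun_prop
  obtain ⟨tb, htbI, hmax⟩ := hc.exists_isMaxOn ⟨0, h0⟩ hecont.continuousOn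
  have hb := hsub htbI
  set p₀ := genA tb hb.1 hb.2
  have hp₀gen := genA_mem I' tb htbI hb.1 hb.2
  have hval : iPM cc p₀ = e tb := by
    obtain ⟨e1, e2, e3⟩ := genA_atm tb hb.1 hb.2
    rw [iPM_eq, e1, e2, e3]
  refine ⟨κ + μ' * e tb, ⟨p₀, subset_hull _ hp₀gen, by show κ + μ' * iPM cc _ = _; rw [hval]⟩, ?_⟩
  rintro r ⟨p, hp, rfl⟩
  have hub : iPM cc p ≤ e tb := by
    refine hull_le _ cc (e tb) ?_ p hp
    intro p' hp'
    obtain ⟨t, ht, hv⟩ := gen_iPM_A I' cc p' hp'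
    rw [hv]
    exact hmax ht
  show κ + μ' * iPM cc p ≤ κ + μ' * e tb
  nlinarith

lemma exists_isGreatest_b (I' : Set ℝ) (hc : IsCompact I') (h0 : (0:ℝ) ∈ I')
    (hsub : I' ⊆ Set.Icc 0 (1/2)) (cc : St → ℝ) (κ μ' : ℝ) (hμ : 0 ≤ μ') :
    ∃ r, IsGreatest ((fun p => κ + μ' * iPM cc p) '' (Gam I' St.b)) r := by
  set e : ℝ → ℝ := fun t => t * cc St.a + (1 - t - t^2) * cc St.b + t^2 * cc St.c with he
  have hecont : Continuous e := by fun_prop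
  obtain ⟨tb, htbI, hmax⟩ := hc.exists_isMaxOn ⟨0, h0⟩ hecont.continuousOn
  have hb := hsub htbI
  set p₀ := genB tb hb.1 hb.2
  have hp₀gen := genB_mem I' tb htbI hb.1 hb.2
  have hval : iPM cc p₀ = e tb := by
    obtain ⟨e1, e2, e3⟩ := genB_atm tb hb.1 hb.2
    rw [iPM_eq, e1, e2, e3]
  refine ⟨κ + μ' * e tb, ⟨p₀, subset_hull _ hp₀gen, by show κ + μ' * iPM cc _ = _; rw [hval]⟩, ?_⟩
  rintro r ⟨p, hp, rfl⟩
  have hub : iPM cc p ≤ e tb := by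
    refine hull_le _ cc (e tb) ?_ p hp
    intro p' hp'
    obtain ⟨t, ht, hv⟩ := gen_iPM_B I' cc p' hp'
    rw [hv]
    exact hmax ht
  show κ + μ' * iPM cc p ≤ κ + μ' * e tb
  nlinarith
lemma iXY_le_add (v φ : St × St → ℝ) (D : ℝ) (h : ∀ z, v z ≤ φ z + D) (p q : PM St) :
    iXY v p q ≤ iXY φ p q + D := by
  rw [iXY_eq, iXY_eq, ← iPM_add_const (fun x => iPM (fun y => φ (x, y)) q) D p]
  refine iPM_mono (fun x => ?_) p
  rw [← iPM_add_const (fun y => φ (x, y)) D q]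
  exact iPM_mono (fun y => h (x, y)) q

lemma const_le_iXY (v : St × St → ℝ) (C : ℝ) (h : ∀ z, C ≤ v z) (p q : PM St) :
    C ≤ iXY v p q := by
  rw [iXY_eq]
  exact const_le_iPM (fun x => const_le_iPM (fun y => h (x, y)) q) p

lemma comparison (I : Set ℝ) (hIc : IsCompact I) (hI0 : (0:ℝ) ∈ I)
    (hIsub : I ⊆ Set.Icc 0 (1/2)) (lam : ℝ) (hlam : lam ∈ Set.Ioc (0:ℝ) 1)
    (w φ : St × St → ℝ)
    (hsh : ShapleyEq (Gam I) (Gam (Set.Icc 0 (1/4))) pay lam w)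
    (cert : ∀ x y : St, ∃ q ∈ Gam (Set.Icc 0 (1/4)) y, ∀ p ∈ Gam I x,
      lam * pay (x, y) + (1 - lam) * iXY φ p q ≤ φ (x, y)) :
    ∀ z : St × St, w z ≤ φ z := by
  classical
  have hne : (Finset.univ : Finset (St × St)).Nonempty := ⟨(St.a, St.a), Finset.mem_univ _⟩
  set g : St × St → ℝ := fun z => w z - φ z with hg
  set D := Finset.univ.sup' hne g with hDdef
  have hD : ∀ z, g z ≤ D := fun z => Finset.le_sup' g (Finset.mem_univ z)
  obtain ⟨z₀, _, hz₀⟩ := Finset.exists_mem_eq_sup' hne g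
  obtain ⟨x₀, y₀⟩ := z₀
  obtain ⟨qs, hqs, hcert⟩ := cert x₀ y₀
  have h1lam : (0:ℝ) ≤ 1 - lam := by linarith [hlam.2]
  have hwD : ∀ z, w z ≤ φ z + D := fun z => by have := hD z; simp only [hg] at this; linarith
  have hG : ∃ r, IsGreatest
      ((fun p => lam * pay (x₀, y₀) + (1 - lam) * iXY w p qs) '' Gam I x₀) r := by
    cases x₀ with
    | a =>
      exact exists_isGreatest_a I hIc hI0 hIsub
        (fun x => iPM (fun y => w (x, y)) qs) (lam * pay (St.a, y₀)) (1 - lam) h1lam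
    | b =>
      exact exists_isGreatest_b I hIc hI0 hIsub
        (fun x => iPM (fun y => w (x, y)) qs) (lam * pay (St.b, y₀)) (1 - lam) h1lam
    | c =>
      refine ⟨lam * pay (St.c, y₀) + (1 - lam) * iXY w (dirac St.c) qs,
        ⟨dirac St.c, rfl, rfl⟩, ?_⟩
      rintro r ⟨p, hp, rfl⟩
      rw [Gam_c, Set.mem_singleton_iff] at hp
      rw [hp]
  obtain ⟨r, ⟨p₀, hp₀, hrval⟩, hrub⟩ := hG
  have hle : w (x₀, y₀) ≤ r := (hsh x₀ y₀).2.2 ⟨qs, hqs, ⟨p₀, hp₀, hrval⟩, hrub⟩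
  simp only at hrval
  have h1 : iXY w p₀ qs ≤ iXY φ p₀ qs + D := iXY_le_add w φ D hwD p₀ qs
  have h2 := hcert p₀ hp₀
  have hDeq : w (x₀, y₀) - φ (x₀, y₀) = D := by rw [hDdef, hz₀]
  have h3 : (1 - lam) * iXY w p₀ qs ≤ (1 - lam) * (iXY φ p₀ qs + D) :=
    mul_le_mul_of_nonneg_left h1 h1lam
  have hDle : D ≤ (1 - lam) * D := by nlinarith
  have hD0 : D ≤ 0 := by
    by_contra hcon
    push_neg at hcon
    nlinarith [mul_pos hlam.1 hcon]
  intro z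
  have := hD z
  simp only [hg] at this
  linarith

lemma w_nonneg (I : Set ℝ) (lam : ℝ) (hlam : lam ∈ Set.Ioc (0:ℝ) 1)
    (w : St × St → ℝ) (hsh : ShapleyEq (Gam I) (Gam (Set.Icc 0 (1/4))) pay lam w) :
    ∀ z : St × St, 0 ≤ w z := by
  classical
  have hne : (Finset.univ : Finset (St × St)).Nonempty := ⟨(St.a, St.a), Finset.mem_univ _⟩
  set g : St × St → ℝ := fun z => - w z with hg
  set D := Finset.univ.sup' hne g with hDdef
  have hD : ∀ z, g z ≤ D := fun z => Finset.le_sup' g (Finset.mem_univ z)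
  obtain ⟨z₀, _, hz₀⟩ := Finset.exists_mem_eq_sup' hne g
  obtain ⟨x₀, y₀⟩ := z₀
  obtain ⟨p₀, _, hL⟩ := (hsh x₀ y₀).1.1
  obtain ⟨q₀, _, hval⟩ := hL.1
  simp only at hval
  have h1 : -D ≤ iXY w p₀ q₀ :=
    const_le_iXY w (-D) (fun z => by have := hD z; simp only [hg] at this; linarith) p₀ q₀
  have hpay : 0 ≤ pay (x₀, y₀) := by rw [pay]; dsimp only; split <;> norm_num
  have h1lam : (0:ℝ) ≤ 1 - lam := by linarith [hlam.2]
  have hwz : w (x₀, y₀) = -D := by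
    have h := hz₀
    rw [← hDdef] at h
    simp only [hg] at h
    linarith
  have h2 : (1 - lam) * (-D) ≤ (1 - lam) * iXY w p₀ q₀ := mul_le_mul_of_nonneg_left h1 h1lam
  have h3 : 0 ≤ lam * pay (x₀, y₀) := mul_nonneg (le_of_lt hlam.1) hpay
  have h4 : lam * D ≤ 0 := by nlinarith
  have hD0 : D ≤ 0 := by
    by_contra hcon
    push_neg at hcon
    nlinarith [mul_pos hlam.1 hcon]
  intro z
  have := hD z
  simp only [hg] at this
  linarith
lemma iPM_genA (f : St → ℝ) (t : ℝ) (h0 : 0 ≤ t) (h2 : t ≤ 1/2) :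
    iPM f (genA t h0 h2) = (1-t-t^2)*f St.a + t*f St.b + t^2*f St.c := by
  obtain ⟨e1, e2, e3⟩ := genA_atm t h0 h2
  rw [iPM_eq, e1, e2, e3]

lemma iPM_genB (f : St → ℝ) (t : ℝ) (h0 : 0 ≤ t) (h2 : t ≤ 1/2) :
    iPM f (genB t h0 h2) = t*f St.a + (1-t-t^2)*f St.b + t^2*f St.c := by
  obtain ⟨e1, e2, e3⟩ := genB_atm t h0 h2
  rw [iPM_eq, e1, e2, e3]

/-- the super-solution -/
def phi (σ : ℝ) : St × St → ℝ := fun z =>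
  match z with
  | (St.a, St.a) => 4/9+σ
  | (St.a, St.b) => (4/9+σ)+(10/9+(5/2)*σ-32*σ^2)*σ
  | (St.a, St.c) => 1
  | (St.b, St.a) => (4/9+σ)+(10/9+(5/2)*σ-32*σ^2)*σ
  | (St.b, St.b) => 4/9+σ
  | (St.b, St.c) => 1
  | (St.c, St.a) => 16*σ^2
  | (St.c, St.b) => 16*σ^2
  | (St.c, St.c) => 0

lemma hull_cert_a (I : Set ℝ) (cc : St → ℝ) (κ μ target : ℝ) (hμ : 0 < μ)
    (H : ∀ t ∈ I, κ + μ*((1-t-t^2)*cc St.a + t*cc St.b + t^2*cc St.c) ≤ target) :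
    ∀ p ∈ Gam I St.a, κ + μ * iPM cc p ≤ target := by
  intro p hp
  have h2 : ∀ p' ∈ gen St.a St.b St.c I, iPM cc p' ≤ (target - κ)/μ := by
    intro p' hp'
    obtain ⟨t, ht, hv⟩ := gen_iPM_A I cc p' hp'
    rw [hv, le_div_iff₀ hμ]
    have := H t ht
    nlinarith
  have h3 := hull_le _ cc _ h2 p (by rwa [Gam_a] at hp)
  rw [le_div_iff₀ hμ] at h3
  nlinarith

lemma hull_cert_b (I : Set ℝ) (cc : St → ℝ) (κ μ target : ℝ) (hμ : 0 < μ)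
    (H : ∀ t ∈ I, κ + μ*(t*cc St.a + (1-t-t^2)*cc St.b + t^2*cc St.c) ≤ target) :
    ∀ p ∈ Gam I St.b, κ + μ * iPM cc p ≤ target := by
  intro p hp
  have h2 : ∀ p' ∈ gen St.b St.a St.c I, iPM cc p' ≤ (target - κ)/μ := by
    intro p' hp'
    obtain ⟨t, ht, hv⟩ := gen_iPM_B I cc p' hp'
    rw [hv, le_div_iff₀ hμ]
    have := H t ht
    nlinarith
  have h3 := hull_le _ cc _ h2 p (by rwa [Gam_b] at hp)
  rw [le_div_iff₀ hμ] at h3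
  nlinarith
set_option maxHeartbeats 1000000

lemma num_aa1 (σ t : ℝ) (hσ0 : 0 < σ) (hσ1 : σ ≤ 1/100) (ht0 : 0 ≤ t) (ht : t ≤ σ/2) :
    (1-σ^2)*((1-t-t^2)*(4/9+σ) + t*((4/9+σ)+(10/9+(5/2)*σ-32*σ^2)*σ) + t^2*(16*σ^2))
      ≤ 4/9+σ := by
  have hXZ : (0:ℝ) ≤ (4/9+σ)-16*σ^2 := by nlinarith
  have hA : 0 ≤ σ/2 - t := by linarith
  have hB : 0 ≤ (10/9+(5/2)*σ-32*σ^2)*σ - ((4/9+σ)-16*σ^2)*(σ/2+t) := by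
    nlinarith [mul_nonneg hA hXZ]
  have hg : (10/9+(5/2)*σ-32*σ^2)*σ*t - ((4/9+σ)-16*σ^2)*t^2 ≤ σ^2*(4/9+σ) := by
    nlinarith [mul_nonneg hA hB]
  have h1 : (0:ℝ) ≤ 1-σ^2 := by nlinarith
  nlinarith [mul_le_mul_of_nonneg_left hg h1,
    mul_nonneg (mul_nonneg (mul_nonneg hσ0.le hσ0.le) (mul_nonneg hσ0.le hσ0.le))
      (by linarith : (0:ℝ) ≤ 4/9+σ)]

lemma num_aa2 (σ t : ℝ) (hσ0 : 0 < σ) (hσ1 : σ ≤ 1/100) (ht : 2*σ ≤ t) (ht2 : t ≤ 1/2) :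
    (1-σ^2)*((1-t-t^2)*(4/9+σ) + t*((4/9+σ)+(10/9+(5/2)*σ-32*σ^2)*σ) + t^2*(16*σ^2))
      ≤ 4/9+σ := by
  have hXZ : (0:ℝ) ≤ (4/9+σ)-16*σ^2 := by nlinarith
  have hA : 0 ≤ t - 2*σ := by linarith
  have hB : 0 ≤ ((4/9+σ)-16*σ^2)*(t+2*σ) - (10/9+(5/2)*σ-32*σ^2)*σ := by
    nlinarith [mul_nonneg hA hXZ]
  have hg : (10/9+(5/2)*σ-32*σ^2)*σ*t - ((4/9+σ)-16*σ^2)*t^2 ≤ σ^2*(4/9+σ) := by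
    nlinarith [mul_nonneg hA hB]
  have h1 : (0:ℝ) ≤ 1-σ^2 := by nlinarith
  nlinarith [mul_le_mul_of_nonneg_left hg h1,
    mul_nonneg (mul_nonneg (mul_nonneg hσ0.le hσ0.le) (mul_nonneg hσ0.le hσ0.le))
      (by linarith : (0:ℝ) ≤ 4/9+σ)]

lemma num_ab (σ t : ℝ) (hσ0 : 0 < σ) (hσ1 : σ ≤ 1/100) (ht0 : 0 ≤ t) (ht2 : t ≤ 1/2) :
    σ^2*1 + (1-σ^2)*(
      (1-t-t^2)*(σ*(4/9+σ) + (1-σ-σ^2)*((4/9+σ)+(10/9+(5/2)*σ-32*σ^2)*σ) + σ^2*1)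
      + t*(σ*((4/9+σ)+(10/9+(5/2)*σ-32*σ^2)*σ) + (1-σ-σ^2)*(4/9+σ) + σ^2*1)
      + t^2*(σ*(16*σ^2) + (1-σ-σ^2)*(16*σ^2) + σ^2*0))
      ≤ (4/9+σ)+(10/9+(5/2)*σ-32*σ^2)*σ := by
  have hM : (0:ℝ) ≤ 10/9+(5/2)*σ-32*σ^2 := by nlinarith
  have hba : σ*((4/9+σ)+(10/9+(5/2)*σ-32*σ^2)*σ) + (1-σ-σ^2)*(4/9+σ) + σ^2*1
      ≤ σ*(4/9+σ) + (1-σ-σ^2)*((4/9+σ)+(10/9+(5/2)*σ-32*σ^2)*σ) + σ^2*1 := by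
    nlinarith [mul_nonneg hM hσ0.le]
  have hca : σ*(16*σ^2) + (1-σ-σ^2)*(16*σ^2) + σ^2*0
      ≤ σ*(4/9+σ) + (1-σ-σ^2)*((4/9+σ)+(10/9+(5/2)*σ-32*σ^2)*σ) + σ^2*1 := by
    nlinarith [mul_nonneg hM hσ0.le]
  have hInner : (1-t-t^2)*(σ*(4/9+σ) + (1-σ-σ^2)*((4/9+σ)+(10/9+(5/2)*σ-32*σ^2)*σ) + σ^2*1)
      + t*(σ*((4/9+σ)+(10/9+(5/2)*σ-32*σ^2)*σ) + (1-σ-σ^2)*(4/9+σ) + σ^2*1)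
      + t^2*(σ*(16*σ^2) + (1-σ-σ^2)*(16*σ^2) + σ^2*0)
      ≤ σ*(4/9+σ) + (1-σ-σ^2)*((4/9+σ)+(10/9+(5/2)*σ-32*σ^2)*σ) + σ^2*1 := by
    nlinarith [mul_nonneg ht0 (sub_nonneg.2 hba), mul_nonneg (mul_nonneg ht0 ht0) (sub_nonneg.2 hca)]
  have h1 : (0:ℝ) ≤ 1-σ^2 := by nlinarith
  have hfinal : σ^2*1 + (1-σ^2)*(σ*(4/9+σ) + (1-σ-σ^2)*((4/9+σ)+(10/9+(5/2)*σ-32*σ^2)*σ) + σ^2*1)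
      ≤ (4/9+σ)+(10/9+(5/2)*σ-32*σ^2)*σ := by
    nlinarith [mul_pos hσ0 hσ0, mul_pos (mul_pos hσ0 hσ0) hσ0,
      mul_pos (mul_pos (mul_pos hσ0 hσ0) hσ0) hσ0,
      mul_pos (mul_pos (mul_pos (mul_pos hσ0 hσ0) hσ0) hσ0) hσ0]
  nlinarith [mul_le_mul_of_nonneg_left hInner h1]

lemma num_ca (σ : ℝ) (hσ0 : 0 < σ) (hσ1 : σ ≤ 1/100) :
    σ^2*1 + (1-σ^2)*((1-(1/4)-(1/4)^2)*(16*σ^2) + (1/4)*(16*σ^2) + (1/4)^2*0) ≤ 16*σ^2 := by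
  nlinarith [sq_nonneg σ, mul_nonneg (sq_nonneg σ) (sq_nonneg σ)]
set_option maxHeartbeats 1000000 in
lemma cert_all (I : Set ℝ) (hIsub : I ⊆ Set.Icc 0 (1/2)) (σ : ℝ) (hσ0 : 0 < σ)
    (hσ1 : σ ≤ 1/100) (hgap : ∀ s ∈ I, s ∉ Set.Ioo (σ/2) (2*σ)) :
    ∀ x y : St, ∃ q ∈ Gam (Set.Icc 0 (1/4)) y, ∀ p ∈ Gam I x,
      σ^2 * pay (x, y) + (1 - σ^2) * iXY (phi σ) p q ≤ phi σ (x, y) := by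
  have hμ : (0:ℝ) < 1 - σ^2 := by nlinarith
  have h12 : σ ≤ 1/2 := by linarith
  have hσ4 : σ ∈ Set.Icc (0:ℝ) (1/4) := ⟨hσ0.le, by linarith⟩
  have h14a : (0:ℝ) ≤ 1/4 := by norm_num
  have h14b : (1/4:ℝ) ≤ 1/2 := by norm_num
  have h14m : (1/4:ℝ) ∈ Set.Icc (0:ℝ) (1/4) := ⟨by norm_num, le_refl _⟩
  have h0m : (0:ℝ) ∈ Set.Icc (0:ℝ) (1/4) := ⟨le_refl _, by norm_num⟩
  intro x y
  cases x with
  | a =>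
    cases y with
    | a =>
      refine ⟨dirac St.a, subset_hull _ (dirac_mem_genA _ h0m), ?_⟩
      refine hull_cert_a I (fun x => iPM (fun y => phi σ (x, y)) (dirac St.a))
        (σ^2 * pay (St.a, St.a)) (1-σ^2) (phi σ (St.a, St.a)) hμ ?_
      intro t ht
      have ht0 := (hIsub ht).1
      have ht2 := (hIsub ht).2
      have hpay : pay (St.a, St.a) = 0 := by rw [pay]; exact if_pos rfl
      rw [hpay]
      simp only [iPM_dirac, phi]
      rcases le_or_gt t (σ/2) with hc | hc
      · nlinarith [num_aa1 σ t hσ0 hσ1 ht0 hc]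
      · have h2t : 2*σ ≤ t := by
          by_contra hlt
          push_neg at hlt
          exact hgap t ht (Set.mem_Ioo.2 ⟨hc, hlt⟩)
        nlinarith [num_aa2 σ t hσ0 hσ1 h2t ht2]
    | b =>
      refine ⟨genB σ hσ0.le h12, subset_hull _ (genB_mem _ σ hσ4 hσ0.le h12), ?_⟩
      refine hull_cert_a I (fun x => iPM (fun y => phi σ (x, y)) (genB σ hσ0.le h12))
        (σ^2 * pay (St.a, St.b)) (1-σ^2) (phi σ (St.a, St.b)) hμ ?_
      intro t ht
      have ht0 := (hIsub ht).1
      have ht2 := (hIsub ht).2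
      have hpay : pay (St.a, St.b) = 1 := by rw [pay]; exact if_neg (by decide)
      rw [hpay]
      simp only [iPM_genB, phi]
      nlinarith [num_ab σ t hσ0 hσ1 ht0 ht2]
    | c =>
      refine ⟨dirac St.c, rfl, ?_⟩
      refine hull_cert_a I (fun x => iPM (fun y => phi σ (x, y)) (dirac St.c))
        (σ^2 * pay (St.a, St.c)) (1-σ^2) (phi σ (St.a, St.c)) hμ ?_
      intro t ht
      have ht0 := (hIsub ht).1
      have hpay : pay (St.a, St.c) = 1 := by rw [pay]; exact if_neg (by decide)
      rw [hpay]
      simp only [iPM_dirac, phi]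
      nlinarith [mul_nonneg (mul_nonneg ht0 ht0) hμ.le]
  | b =>
    cases y with
    | a =>
      refine ⟨genA σ hσ0.le h12, subset_hull _ (genA_mem _ σ hσ4 hσ0.le h12), ?_⟩
      refine hull_cert_b I (fun x => iPM (fun y => phi σ (x, y)) (genA σ hσ0.le h12))
        (σ^2 * pay (St.b, St.a)) (1-σ^2) (phi σ (St.b, St.a)) hμ ?_
      intro t ht
      have ht0 := (hIsub ht).1
      have ht2 := (hIsub ht).2
      have hpay : pay (St.b, St.a) = 1 := by rw [pay]; exact if_neg (by decide)
      rw [hpay]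
      simp only [iPM_genA, phi]
      nlinarith [num_ab σ t hσ0 hσ1 ht0 ht2]
    | b =>
      refine ⟨dirac St.b, subset_hull _ (dirac_mem_genB _ h0m), ?_⟩
      refine hull_cert_b I (fun x => iPM (fun y => phi σ (x, y)) (dirac St.b))
        (σ^2 * pay (St.b, St.b)) (1-σ^2) (phi σ (St.b, St.b)) hμ ?_
      intro t ht
      have ht0 := (hIsub ht).1
      have ht2 := (hIsub ht).2
      have hpay : pay (St.b, St.b) = 0 := by rw [pay]; exact if_pos rfl
      rw [hpay]
      simp only [iPM_dirac, phi]
      rcases le_or_gt t (σ/2) with hc | hc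
      · nlinarith [num_aa1 σ t hσ0 hσ1 ht0 hc]
      · have h2t : 2*σ ≤ t := by
          by_contra hlt
          push_neg at hlt
          exact hgap t ht (Set.mem_Ioo.2 ⟨hc, hlt⟩)
        nlinarith [num_aa2 σ t hσ0 hσ1 h2t ht2]
    | c =>
      refine ⟨dirac St.c, rfl, ?_⟩
      refine hull_cert_b I (fun x => iPM (fun y => phi σ (x, y)) (dirac St.c))
        (σ^2 * pay (St.b, St.c)) (1-σ^2) (phi σ (St.b, St.c)) hμ ?_
      intro t ht
      have ht0 := (hIsub ht).1
      have hpay : pay (St.b, St.c) = 1 := by rw [pay]; exact if_neg (by decide)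
      rw [hpay]
      simp only [iPM_dirac, phi]
      nlinarith [mul_nonneg (mul_nonneg ht0 ht0) hμ.le]
  | c =>
    cases y with
    | a =>
      refine ⟨genA (1/4) h14a h14b, subset_hull _ (genA_mem _ (1/4) h14m h14a h14b), ?_⟩
      intro p hp
      rw [Gam_c, Set.mem_singleton_iff] at hp
      subst hp
      have hpay : pay (St.c, St.a) = 1 := by rw [pay]; exact if_neg (by decide)
      rw [iXY_eq, iPM_dirac, iPM_genA, hpay]
      simp only [phi]
      nlinarith [num_ca σ hσ0 hσ1]
    | b =>
      refine ⟨genB (1/4) h14a h14b, subset_hull _ (genB_mem _ (1/4) h14m h14a h14b), ?_⟩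
      intro p hp
      rw [Gam_c, Set.mem_singleton_iff] at hp
      subst hp
      have hpay : pay (St.c, St.b) = 1 := by rw [pay]; exact if_neg (by decide)
      rw [iXY_eq, iPM_dirac, iPM_genB, hpay]
      simp only [phi]
      nlinarith [num_ca σ hσ0 hσ1]
    | c =>
      refine ⟨dirac St.c, rfl, ?_⟩
      intro p hp
      rw [Gam_c, Set.mem_singleton_iff] at hp
      subst hp
      have hpay : pay (St.c, St.c) = 0 := by rw [pay]; exact if_pos rfl
      rw [iXY_eq, iPM_dirac, iPM_dirac, hpay]
      simp [phi]

/-- with J = [0,1/4], min I = 0 and max I = 1/4, along any vanishing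
sequence of discount factors lam_n such that the open interval
(sqrt(lam_n)/2, 2 sqrt(lam_n)) does not intersect I, one has
limsup_n y_{lam_n} <= 4/9, where y_lam = v_lam(a,b'). -/
theorem statement15
    (I : Set ℝ) (hIc : IsCompact I) (hIsub : I ⊆ Set.Icc 0 (1 / 2))
    (hImin : IsLeast I 0) (hImax : IsGreatest I (1 / 4))
    (lam : ℕ → ℝ) (hlam : ∀ n, lam n ∈ Set.Ioc (0 : ℝ) 1)
    (hlam0 : Filter.Tendsto lam Filter.atTop (nhds 0))
    (hgap : ∀ n : ℕ, ∀ s ∈ I, s ∉ Set.Ioo (Real.sqrt (lam n) / 2) (2 * Real.sqrt (lam n)))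
    (w : ℕ → St × St → ℝ)
    (hsh : ∀ n, ShapleyEq (Gam I) (Gam (Set.Icc 0 (1 / 4))) pay (lam n) (w n)) :
    Filter.limsup (fun n => w n (St.a, St.b)) Filter.atTop ≤ 4 / 9 := by
  set g : ℕ → ℝ := fun n => 4/9 + 4 * Real.sqrt (lam n) with hgdef
  have hsq0 : Filter.Tendsto (fun n => Real.sqrt (lam n)) Filter.atTop (nhds 0) := by
    have := (Real.continuous_sqrt.tendsto 0).comp hlam0
    simpa [Function.comp_def] using this
  have hgt : Filter.Tendsto g Filter.atTop (nhds (4/9)) := by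
    have h4 : Filter.Tendsto (fun n => 4 * Real.sqrt (lam n)) Filter.atTop (nhds 0) := by
      simpa using hsq0.const_mul (4:ℝ)
    have := (tendsto_const_nhds (x := (4/9:ℝ)) (f := Filter.atTop)).add h4
    simpa using this
  have hev : ∀ᶠ n in Filter.atTop, w n (St.a, St.b) ≤ g n := by
    filter_upwards [hlam0.eventually_lt_const (show (0:ℝ) < 1/10000 by norm_num)] with n hn
    set σ := Real.sqrt (lam n) with hσdef
    have hl0 := (hlam n).1
    have hσ0 : 0 < σ := Real.sqrt_pos.2 hl0
    have hσsq : σ^2 = lam n := Real.sq_sqrt hl0.le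
    have hσ1 : σ ≤ 1/100 := by
      have h1 : σ ≤ Real.sqrt (1/10000) := Real.sqrt_le_sqrt hn.le
      have h2 : Real.sqrt (1/10000) = 1/100 := by
        rw [show (1/10000:ℝ) = (1/100)^2 by norm_num, Real.sqrt_sq (by norm_num)]
      linarith
    have cert := cert_all I hIsub σ hσ0 hσ1 (hgap n)
    simp only [hσsq] at cert
    have hcomp := comparison I hIc hImin.1 hIsub (lam n) (hlam n) (w n) (phi σ) (hsh n) cert
    have := hcomp (St.a, St.b)
    have hφ : phi σ (St.a, St.b) = (4/9+σ)+(10/9+(5/2)*σ-32*σ^2)*σ := rfl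
    rw [hφ] at this
    have : w n (St.a, St.b) ≤ 4/9 + 4*σ := by nlinarith
    simpa [hgdef] using this
  have hcob : Filter.IsCoboundedUnder (· ≤ ·) Filter.atTop (fun n => w n (St.a, St.b)) := by
    refine Filter.isCoboundedUnder_le_of_le Filter.atTop (x := 0) (fun n => ?_)
    exact w_nonneg I (lam n) (hlam n) (w n) (hsh n) (St.a, St.b)
  have hbdd : Filter.IsBoundedUnder (· ≤ ·) Filter.atTop g := hgt.isBoundedUnder_le
  calc Filter.limsup (fun n => w n (St.a, St.b)) Filter.atTop
      ≤ Filter.limsup g Filter.atTop := Filter.limsup_le_limsup hev hcob hbdd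
    _ = 4/9 := hgt.limsup_eq

end GG
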